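/- Every local π-base at the identity of H(ω*) has cardinality at least 𝔠; that is, if 𝓥 is a family of nonempty open subsets of H(ω*) such that every neighborhood of the identity contains a member of 𝓥, then |𝓥| ≥ 𝔠. In particular, every local base at the identity of H(ω*) has cardinality at least 𝔠, and since H(ω*) has a base of cardinality at most 𝔠, the character and π-character of H(ω*) at the identity both equal 𝔠. -/

import Mathlib

open Set Topology TopologicalSpace

/-- The compact-open topology on the group of self-homeomorphisms of a space:
the topology induced from the compact-open topology on `C(X, X)`. -/
instance homeomorphCompactOpen (X : Type*) [TopologicalSpace X] :
    TopologicalSpace (X ≃ₜ X) :=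
  TopologicalSpace.induced (fun h : X ≃ₜ X => (h : C(X, X))) ContinuousMap.compactOpen

/-- The group of self-homeomorphisms of a space, under composition. -/
instance homeomorphGroup (X : Type*) [TopologicalSpace X] : Group (X ≃ₜ X) where
  mul f g := g.trans f
  one := Homeomorph.refl X
  inv := Homeomorph.symm
  mul_assoc _ _ _ := Homeomorph.ext fun _ => rfl
  one_mul _ := Homeomorph.ext fun _ => rfl
  mul_one _ := Homeomorph.ext fun _ => rfl
  inv_mul_cancel f := Homeomorph.ext fun x => f.symm_apply_apply x

/-- The weight of a topological space: the least cardinality of a base of its topology. -/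
noncomputable def TopologicalSpace.weight (X : Type u) [TopologicalSpace X] : Cardinal.{u} :=
  ⨅ B : {B : Set (Set X) // TopologicalSpace.IsTopologicalBasis B}, Cardinal.mk B.1

/-- A set is an Fσ-set if it is a countable union of closed sets. -/
def IsFsigma {X : Type*} [TopologicalSpace X] (s : Set X) : Prop :=
  ∃ F : ℕ → Set X, (∀ n, IsClosed (F n)) ∧ s = ⋃ n, F n

/-- An F-space (for normal spaces): disjoint open Fσ-sets have disjoint closures. -/
def IsFSpace (X : Type*) [TopologicalSpace X] : Prop :=
  ∀ U V : Set X, IsOpen U → IsOpen V → IsFsigma U → IsFsigma V → Disjoint U V →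
    Disjoint (closure U) (closure V)

/-- A Parovičenko space: a compact zero-dimensional F-space of weight `𝔠` in which
every nonempty Gδ-set has infinite interior. -/
structure IsParovicenko (X : Type u) [TopologicalSpace X] : Prop where
  compact : CompactSpace X
  t2 : T2Space X
  zeroDim : TopologicalSpace.IsTopologicalBasis {s : Set X | IsClopen s}
  fSpace : IsFSpace X
  weight_eq : TopologicalSpace.weight X = Cardinal.continuum
  gdelta_int : ∀ s : Set X, IsGδ s → s.Nonempty → (interior s).Infinite

/-- The Gδ-modification of a topology: the topology generated by the Gδ-sets. -/
def gdeltaMod {X : Type*} (t : TopologicalSpace X) : TopologicalSpace X :=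
  TopologicalSpace.generateFrom {s : Set X | @IsGδ X t s}

/-- The Čech–Stone remainder `βα \ α` of a space `α`. -/
abbrev CechStoneRemainder (α : Type u) [TopologicalSpace α] : Type u :=
  {p : StoneCech α // p ∉ Set.range (stoneCechUnit : α → StoneCech α)}

/-- `ω* = βω \ ω`, the Čech–Stone remainder of the countable discrete space `ω`. -/
abbrev OmegaStar : Type := CechStoneRemainder ℕ
namespace OmegaStarAux

/-- The canonical identification of `βℕ` with the space of ultrafilters on `ℕ`. -/
noncomputable def phi : StoneCech ℕ → Ultrafilter ℕ :=
  stoneCechExtend (continuous_of_discreteTopology (f := (pure : ℕ → Ultrafilter ℕ)))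

noncomputable def psi : Ultrafilter ℕ → StoneCech ℕ := Ultrafilter.extend stoneCechUnit

theorem phi_unit (n : ℕ) : phi (stoneCechUnit n) = pure n :=
  congrFun (stoneCechExtend_extends _) n

theorem psi_pure (n : ℕ) : psi (pure n) = stoneCechUnit n :=
  congrFun (ultrafilter_extend_extends _) n

theorem continuous_phi : Continuous phi := continuous_stoneCechExtend _
theorem continuous_psi : Continuous psi := continuous_ultrafilter_extend _

theorem phi_psi (p : Ultrafilter ℕ) : phi (psi p) = p := by
  have h : Continuous (phi ∘ psi) := continuous_phi.comp continuous_psi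
  have := h.ext_on denseRange_pure continuous_id ?_
  · exact congrFun this p
  · rintro _ ⟨n, rfl⟩
    simp only [Function.comp_apply, id_eq, psi_pure, phi_unit]

theorem psi_phi (x : StoneCech ℕ) : psi (phi x) = x := by
  have h : Continuous (psi ∘ phi) := continuous_psi.comp continuous_phi
  have := h.ext_on denseRange_stoneCechUnit continuous_id ?_
  · exact congrFun this x
  · rintro _ ⟨n, rfl⟩
    simp only [Function.comp_apply, id_eq, psi_pure, phi_unit]

theorem phi_injective : Function.Injective phi := by
  intro x y h
  have := congrArg psi h
  rwa [psi_phi, psi_phi] at this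

/-- membership in the unit range corresponds to principal ultrafilters -/
theorem mem_range_unit_iff {x : StoneCech ℕ} :
    x ∈ Set.range (stoneCechUnit : ℕ → StoneCech ℕ) ↔ ∃ n, phi x = pure n := by
  constructor
  · rintro ⟨n, rfl⟩; exact ⟨n, phi_unit n⟩
  · rintro ⟨n, h⟩
    refine ⟨n, ?_⟩
    have := congrArg psi h
    rw [psi_phi, psi_pure] at this
    exact this.symm

theorem singleton_mem_iff {p : Ultrafilter ℕ} {n : ℕ} : {n} ∈ p ↔ p = pure n := by
  constructor
  · intro h
    apply Ultrafilter.eq_of_le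
    intro s hs
    rcases Filter.mem_pure.mp hs with hn
    exact Filter.mem_of_superset h (by simpa [Set.singleton_subset_iff] using hn)
  · rintro rfl; exact Filter.mem_pure.mpr rfl

theorem isOpen_range_pure : IsOpen (Set.range (pure : ℕ → Ultrafilter ℕ)) := by
  have : Set.range (pure : ℕ → Ultrafilter ℕ) = ⋃ n, {p : Ultrafilter ℕ | {n} ∈ p} := by
    ext p
    simp only [Set.mem_range, Set.mem_iUnion, Set.mem_setOf_eq]
    constructor
    · rintro ⟨n, rfl⟩; exact ⟨n, Filter.mem_pure.mpr rfl⟩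
    · rintro ⟨n, h⟩; exact ⟨n, (singleton_mem_iff.mp h).symm⟩
  rw [this]
  exact isOpen_iUnion fun n => ultrafilter_isOpen_basic _

theorem range_unit_eq : Set.range (stoneCechUnit : ℕ → StoneCech ℕ) =
    phi ⁻¹' (Set.range (pure : ℕ → Ultrafilter ℕ)) := by
  ext x
  rw [Set.mem_preimage]
  rw [show (x ∈ Set.range (stoneCechUnit : ℕ → StoneCech ℕ)) ↔ ∃ n, phi x = pure n from mem_range_unit_iff]
  simp only [Set.mem_range]
  constructor
  · rintro ⟨n, h⟩; exact ⟨n, h.symm⟩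
  · rintro ⟨n, h⟩; exact ⟨n, h.symm⟩

theorem isOpen_range_unit : IsOpen (Set.range (stoneCechUnit : ℕ → StoneCech ℕ)) := by
  rw [range_unit_eq]; exact isOpen_range_pure.preimage continuous_phi

instance : CompactSpace OmegaStar :=
  isCompact_iff_compactSpace.mp (isOpen_range_unit.isClosed_compl).isCompact


/-- The basic clopen subset of `ω*` determined by `A ⊆ ℕ`. -/
def star (A : Set ℕ) : Set OmegaStar := {x | A ∈ phi x.1}

theorem isClopen_star (A : Set ℕ) : IsClopen (star A) := by
  have h : star A = (fun x : OmegaStar => phi x.1) ⁻¹' {p : Ultrafilter ℕ | A ∈ p} := rfl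
  have hc : Continuous fun x : OmegaStar => phi x.1 :=
    continuous_phi.comp continuous_subtype_val
  rw [h]
  exact ⟨(ultrafilter_isClosed_basic A).preimage hc, (ultrafilter_isOpen_basic A).preimage hc⟩

theorem isCompact_star (A : Set ℕ) : IsCompact (star A) :=
  (isClopen_star A).isClosed.isCompact

theorem star_compl (A : Set ℕ) : star Aᶜ = (star A)ᶜ := by
  ext x
  simp only [star, Set.mem_setOf_eq, Set.mem_compl_iff]
  exact Ultrafilter.compl_mem_iff_notMem

theorem star_mono {A B : Set ℕ} (h : A ⊆ B) : star A ⊆ star B := fun _ hx =>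
  Filter.mem_of_superset hx h

theorem exists_point {A : Set ℕ} (hA : A.Infinite) : ∃ x : OmegaStar, A ∈ phi x.1 := by
  have hne : Filter.NeBot (Filter.cofinite ⊓ Filter.principal A) := by
    rw [Filter.inf_principal_neBot_iff]
    intro U hU
    obtain ⟨a, ha⟩ := (hA.diff (Filter.mem_cofinite.mp hU)).nonempty
    exact ⟨a, not_not.mp ha.2, ha.1⟩
  set p := Ultrafilter.of (Filter.cofinite ⊓ Filter.principal A) with hp
  have hle := Ultrafilter.of_le (Filter.cofinite ⊓ Filter.principal A)
  have hAp : A ∈ p := Filter.le_principal_iff.mp (hle.trans inf_le_right)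
  have hco : (p : Filter ℕ) ≤ Filter.cofinite := hle.trans inf_le_left
  have hfree : psi p ∉ Set.range (stoneCechUnit : ℕ → StoneCech ℕ) := by
    rw [mem_range_unit_iff]
    rintro ⟨n, hn⟩
    rw [phi_psi] at hn
    have h1 : {n}ᶜ ∈ p := hco (by simp [Filter.mem_cofinite])
    have h2 : {n} ∈ p := by rw [hn]; exact Filter.mem_pure.mpr rfl
    exact (Ultrafilter.compl_mem_iff_notMem.mp h1) h2
  refine ⟨⟨psi p, hfree⟩, ?_⟩
  simpa [phi_psi] using hAp

theorem star_nonempty {A : Set ℕ} (hA : A.Infinite) : (star A).Nonempty := by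
  obtain ⟨x, hx⟩ := exists_point hA
  exact ⟨x, hx⟩

/-- Squeezing lemma: any compact subset of an open subset of `ω*` can be separated
by a basic clopen set `star A`. -/
theorem exists_star_between {K U : Set OmegaStar} (hK : IsCompact K) (hU : IsOpen U)
    (hKU : K ⊆ U) : ∃ A : Set ℕ, K ⊆ star A ∧ star A ⊆ U := by
  -- work upstairs in `Ultrafilter ℕ`
  obtain ⟨U₀, hU₀, hU₀eq⟩ := isOpen_induced_iff.mp hU
  -- transfer `U₀` to the ultrafilter space
  set U₁ : Set (Ultrafilter ℕ) := psi ⁻¹' U₀ with hU₁def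
  have hU₁ : IsOpen U₁ := hU₀.preimage continuous_psi
  have hpre : phi ⁻¹' U₁ = U₀ := by
    ext x; simp only [Set.mem_preimage, hU₁def, psi_phi]
  set K' : Set (Ultrafilter ℕ) := (fun x : OmegaStar => phi x.1) '' K with hK'def
  have hK' : IsCompact K' := hK.image (continuous_phi.comp continuous_subtype_val)
  have hK'U₁ : K' ⊆ U₁ := by
    rintro _ ⟨x, hx, rfl⟩
    have : x.1 ∈ U₀ := by rw [← hU₀eq] at hKU; exact hKU hx
    rw [hU₁def, Set.mem_preimage, psi_phi]
    exact this
  -- cover K' by basic sets contained in U₁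
  have hcov : ∀ p ∈ K', ∃ s : Set ℕ, p ∈ {u : Ultrafilter ℕ | s ∈ u} ∧
      {u : Ultrafilter ℕ | s ∈ u} ⊆ U₁ := by
    intro p hp
    obtain ⟨b, hb, hpb, hbU⟩ :=
      ultrafilterBasis_is_basis.exists_subset_of_mem_open (hK'U₁ hp) hU₁
    obtain ⟨s, rfl⟩ := hb
    exact ⟨s, hpb, hbU⟩
  choose! f hf1 hf2 using hcov
  obtain ⟨T, hT⟩ := hK'.elim_finite_subcover_image
    (fun p (hp : p ∈ K') => ultrafilter_isOpen_basic (f p))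
    (fun p hp => Set.mem_biUnion hp (hf1 p hp))
  obtain ⟨hTK', hTfin, hTcov⟩ := hT
  refine ⟨⋃ p ∈ T, f p, ?_, ?_⟩
  · intro x hx
    have : phi x.1 ∈ K' := ⟨x, hx, rfl⟩
    obtain ⟨p, hpT, hmem⟩ := by
      have := hTcov this
      simpa using this
    exact Filter.mem_of_superset hmem (Set.subset_biUnion_of_mem hpT)
  · intro x hx
    have hx' : (⋃ p ∈ T, f p) ∈ phi x.1 := hx
    have : ∃ p ∈ T, f p ∈ phi x.1 := (Ultrafilter.finite_biUnion_mem_iff hTfin).mp hx'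
    obtain ⟨p, hpT, hmem⟩ := this
    have : phi x.1 ∈ U₁ := hf2 p (hTK' hpT) hmem
    have hx0 : x.1 ∈ U₀ := by rw [← hpre]; exact this
    rw [← hU₀eq]; exact hx0

/-! ### Permutations of `ℕ` induce homeomorphisms of `ω*` -/

noncomputable def bext (σ : ℕ ≃ ℕ) : StoneCech ℕ → StoneCech ℕ :=
  stoneCechExtend (continuous_of_discreteTopology (f := fun n => stoneCechUnit (σ n)))

theorem bext_unit (σ : ℕ ≃ ℕ) (n : ℕ) : bext σ (stoneCechUnit n) = stoneCechUnit (σ n) :=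
  congrFun (stoneCechExtend_extends _) n

theorem continuous_bext (σ : ℕ ≃ ℕ) : Continuous (bext σ) := continuous_stoneCechExtend _

theorem bext_bext (σ : ℕ ≃ ℕ) (x : StoneCech ℕ) : bext σ (bext σ.symm x) = x := by
  have h : Continuous (bext σ ∘ bext σ.symm) := (continuous_bext σ).comp (continuous_bext σ.symm)
  have := h.ext_on denseRange_stoneCechUnit continuous_id ?_
  · exact congrFun this x
  · rintro _ ⟨n, rfl⟩
    simp only [Function.comp_apply, id_eq, bext_unit, Equiv.apply_symm_apply]

theorem continuous_umap (σ : ℕ → ℕ) : Continuous (Ultrafilter.map σ) := by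
  rw [show (Ultrafilter.topologicalSpace : TopologicalSpace (Ultrafilter ℕ)) =
    TopologicalSpace.generateFrom (ultrafilterBasis ℕ) from rfl,
    continuous_generateFrom_iff]
  rintro _ ⟨s, rfl⟩
  have : Ultrafilter.map σ ⁻¹' {u : Ultrafilter ℕ | s ∈ u} = {u : Ultrafilter ℕ | σ ⁻¹' s ∈ u} := by
    ext u; exact Ultrafilter.mem_map
  rw [this]
  exact ultrafilter_isOpen_basic _

theorem phi_bext (σ : ℕ ≃ ℕ) (x : StoneCech ℕ) :
    phi (bext σ x) = Ultrafilter.map σ (phi x) := by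
  have h1 : Continuous (phi ∘ bext σ) := continuous_phi.comp (continuous_bext σ)
  have h2 : Continuous (Ultrafilter.map σ ∘ phi) := (continuous_umap σ).comp continuous_phi
  have := h1.ext_on denseRange_stoneCechUnit h2 ?_
  · exact congrFun this x
  · rintro _ ⟨n, rfl⟩
    simp only [Function.comp_apply, bext_unit, phi_unit]
    exact (Ultrafilter.map_pure σ n).symm

theorem bext_notin_range (σ : ℕ ≃ ℕ) {x : StoneCech ℕ}
    (hx : x ∉ Set.range (stoneCechUnit : ℕ → StoneCech ℕ)) :
    bext σ x ∉ Set.range (stoneCechUnit : ℕ → StoneCech ℕ) := by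
  intro h
  apply hx
  rw [mem_range_unit_iff] at h ⊢
  obtain ⟨n, hn⟩ := h
  rw [phi_bext] at hn
  have h2 := congrArg (Ultrafilter.map ⇑σ.symm) hn
  rw [Ultrafilter.map_map, Ultrafilter.map_pure,
    show ⇑σ.symm ∘ ⇑σ = id from Equiv.symm_comp_self σ, Ultrafilter.map_id] at h2
  exact ⟨σ.symm n, h2⟩

/-- The homeomorphism of `ω*` induced by a permutation of `ℕ`. -/
noncomputable def permOmega (σ : ℕ ≃ ℕ) : OmegaStar ≃ₜ OmegaStar where
  toFun x := ⟨bext σ x.1, bext_notin_range σ x.2⟩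
  invFun x := ⟨bext σ.symm x.1, bext_notin_range σ.symm x.2⟩
  left_inv x := by
    apply Subtype.ext
    show bext σ.symm (bext σ x.1) = x.1
    simpa using bext_bext σ.symm (x := x.1)
  right_inv x := by
    apply Subtype.ext
    exact bext_bext σ x.1
  continuous_toFun := by
    apply Continuous.subtype_mk
    exact (continuous_bext σ).comp continuous_subtype_val
  continuous_invFun := by
    apply Continuous.subtype_mk
    exact (continuous_bext σ.symm).comp continuous_subtype_val

theorem permOmega_mem_star_iff (σ : ℕ ≃ ℕ) (x : OmegaStar) (B : Set ℕ) :
    permOmega σ x ∈ star B ↔ σ ⁻¹' B ∈ phi x.1 := by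
  show B ∈ phi (bext σ x.1) ↔ _
  rw [phi_bext]
  exact Ultrafilter.mem_map

/-! ### A permutation swapping two disjoint infinite sets -/

theorem exists_swap_perm {P Q : Set ℕ} (hP : P.Infinite) (hQ : Q.Infinite)
    (hd : Disjoint P Q) :
    ∃ σ : ℕ ≃ ℕ, (∀ x ∈ P, σ x ∈ Q) ∧ (∀ x ∈ Q, σ x ∈ P) ∧ (∀ x, x ∉ P ∪ Q → σ x = x) := by
  haveI : Infinite ↥P := hP.to_subtype
  haveI : Infinite ↥Q := hQ.to_subtype
  obtain ⟨e⟩ : Nonempty (↥P ≃ ↥Q) := nonempty_equiv_of_countable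
  classical
  set f : ℕ → ℕ := fun x =>
    if h : x ∈ P then (e ⟨x, h⟩ : ℕ) else if h : x ∈ Q then (e.symm ⟨x, h⟩ : ℕ) else x with hf
  have hPQ : ∀ x (h : x ∈ P), f x = (e ⟨x, h⟩ : ℕ) := by intro x h; simp [hf, h]
  have hQP : ∀ x (h : x ∈ Q), f x = (e.symm ⟨x, h⟩ : ℕ) := by
    intro x h
    have hxP : x ∉ P := fun hxP => (Set.disjoint_left.mp hd hxP) h
    simp [hf, hxP, h]
  have hid : ∀ x, x ∉ P ∪ Q → f x = x := by
    intro x hx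
    rw [Set.mem_union] at hx
    push_neg at hx
    simp [hf, hx.1, hx.2]
  have hinv : Function.Involutive f := by
    intro x
    by_cases h : x ∈ P
    · rw [hPQ x h]
      have hq : ((e ⟨x, h⟩ : ↥Q) : ℕ) ∈ Q := (e ⟨x, h⟩).2
      rw [hQP _ hq]
      simp
    · by_cases h' : x ∈ Q
      · rw [hQP x h']
        have hp : ((e.symm ⟨x, h'⟩ : ↥P) : ℕ) ∈ P := (e.symm ⟨x, h'⟩).2
        rw [hPQ _ hp]
        simp
      · rw [hid x (by simp [h, h']), hid x (by simp [h, h'])]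
  refine ⟨hinv.toPerm f, ?_, ?_, ?_⟩
  · intro x h
    show f x ∈ Q
    rw [hPQ x h]; exact (e ⟨x, h⟩).2
  · intro x h
    show f x ∈ P
    rw [hQP x h]; exact (e.symm ⟨x, h⟩).2
  · intro x h
    exact hid x h


local notation "Ω" => OmegaStar
abbrev Hsp : Type := OmegaStar ≃ₜ OmegaStar

noncomputable def iota : Hsp → C(Ω, Ω) := fun h => (h : C(Ω, Ω))

theorem iota_coe (g : Hsp) : ⇑(iota g) = ⇑g := rfl

theorem one_coe : ⇑(1 : Hsp) = id := rfl

theorem nhds_one_eq : nhds (1 : Hsp) = Filter.comap iota (nhds (iota 1)) :=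
  nhds_induced iota 1

theorem isOpen_starMapsTo (A B : Set ℕ) :
    IsOpen {g : Hsp | Set.MapsTo ⇑g (star A) (star B)} := by
  have h : {g : Hsp | Set.MapsTo ⇑g (star A) (star B)} =
      iota ⁻¹' {f : C(Ω, Ω) | Set.MapsTo ⇑f (star A) (star B)} := rfl
  rw [h]
  exact (ContinuousMap.isOpen_setOf_mapsTo (isCompact_star A)
    (isClopen_star B).isOpen).preimage continuous_induced_dom

/-- The basic neighborhood of the identity determined by `A`. -/
def Nbhd (A : Set ℕ) : Set Hsp :=
  {g | Set.MapsTo ⇑g (star A) (star A)} ∩ {g | Set.MapsTo ⇑g (star Aᶜ) (star Aᶜ)}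

theorem Nbhd_mem_nhds (A : Set ℕ) : Nbhd A ∈ nhds (1 : Hsp) := by
  have hopen : IsOpen (Nbhd A) := (isOpen_starMapsTo A A).inter (isOpen_starMapsTo Aᶜ Aᶜ)
  refine hopen.mem_nhds ⟨?_, ?_⟩ <;>
    · show Set.MapsTo ⇑(1 : Hsp) _ _
      rw [one_coe]
      exact fun x hx => hx

theorem surjOn_star {A : Set ℕ} {h : Hsp} (hh : h ∈ Nbhd A) :
    ∀ x ∈ star A, ∃ y ∈ star A, h y = x := by
  intro x hx
  refine ⟨h.symm x, ?_, h.apply_symm_apply x⟩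
  by_contra hy
  have hy' : h.symm x ∈ star Aᶜ := by rw [star_compl]; exact hy
  have := hh.2 hy'
  rw [h.apply_symm_apply] at this
  rw [star_compl] at this
  exact this hx

/-- Subbasic decomposition of open neighborhoods in the compact-open topology,
with compact sets squeezed into basic clopen sets. -/
theorem exists_stone_nbhd {N : Set Hsp} (hN : N ∈ nhds (1 : Hsp)) :
    ∃ G : Set (Set ℕ), G.Finite ∧
      {g : Hsp | ∀ A ∈ G, Set.MapsTo ⇑g (star A) (star A)} ⊆ N := by
  rw [nhds_one_eq] at hN
  obtain ⟨M, hM, hMN⟩ := Filter.mem_comap.mp hN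
  obtain ⟨O, hOM, hO, h1O⟩ := mem_nhds_iff.mp hM
  have hbasis := TopologicalSpace.isTopologicalBasis_of_subbasis
    (ContinuousMap.compactOpen_eq (X := Ω) (Y := Ω))
  obtain ⟨b, hb, h1b, hbO⟩ := hbasis.exists_subset_of_mem_open h1O hO
  obtain ⟨F, ⟨hFfin, hFsub⟩, rfl⟩ := hb
  have key : ∀ s ∈ F, ∃ A : Set ℕ,
      ∀ g : Hsp, Set.MapsTo ⇑g (star A) (star A) → iota g ∈ s := by
    intro s hs
    obtain ⟨K, hK, U, hU, rfl⟩ := hFsub hs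
    have h1s : (iota 1) ∈ {f : C(Ω, Ω) | Set.MapsTo ⇑f K U} := Set.mem_sInter.mp h1b _ hs
    have hKU : K ⊆ U := by
      have := h1s
      simp only [Set.mem_setOf_eq, iota_coe, one_coe] at this
      exact fun x hx => this hx
    obtain ⟨A, hKA, hAU⟩ := exists_star_between hK hU hKU
    exact ⟨A, fun g hg x hx => hAU (hg (hKA hx))⟩
  choose! Afun hAfun using key
  refine ⟨Afun '' F, hFfin.image _, ?_⟩
  intro g hg
  apply hMN
  apply Set.mem_preimage.mpr
  apply hOM
  apply hbO
  rw [Set.mem_sInter]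
  intro s hs
  exact hAfun s hs g (hg (Afun s) (Set.mem_image_of_mem _ hs))

/-- From an open set `V ∋ h` we extract a finite family of subsets of `ℕ` such that
composing `h` with any permutation-induced homeomorphism fixing the family stays in `V`. -/
theorem exists_invariant_family {V : Set Hsp} (hV : IsOpen V) {h : Hsp} (hh : h ∈ V) :
    ∃ 𝓑 : Set (Set ℕ), 𝓑.Finite ∧
      ∀ σ : ℕ ≃ ℕ, (∀ B ∈ 𝓑, σ ⁻¹' B = B) → h.trans (permOmega σ) ∈ V := by
  obtain ⟨O, hO, rfl⟩ := isOpen_induced_iff.mp hV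
  have hhO : iota h ∈ O := hh
  have hbasis := TopologicalSpace.isTopologicalBasis_of_subbasis
    (ContinuousMap.compactOpen_eq (X := Ω) (Y := Ω))
  obtain ⟨b, hb, hhb, hbO⟩ := hbasis.exists_subset_of_mem_open hhO hO
  obtain ⟨F, ⟨hFfin, hFsub⟩, rfl⟩ := hb
  have key : ∀ s ∈ F, ∃ B : Set ℕ,
      ∀ σ : ℕ ≃ ℕ, σ ⁻¹' B = B → iota (h.trans (permOmega σ)) ∈ s := by
    intro s hs
    obtain ⟨K, hK, U, hU, rfl⟩ := hFsub hs
    have hhs : Set.MapsTo ⇑h K U := Set.mem_sInter.mp hhb _ hs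
    have himg : ⇑h '' K ⊆ U := hhs.image_subset
    obtain ⟨B, hKB, hBU⟩ := exists_star_between (hK.image h.continuous) hU himg
    refine ⟨B, fun σ hσ => ?_⟩
    show Set.MapsTo ⇑(h.trans (permOmega σ)) K U
    intro x hx
    rw [Homeomorph.trans_apply]
    apply hBU
    have hhx : h x ∈ star B := hKB (Set.mem_image_of_mem _ hx)
    rw [permOmega_mem_star_iff, hσ]
    exact hhx
  choose! Bfun hBfun using key
  refine ⟨Bfun '' F, hFfin.image _, ?_⟩
  intro σ hσ
  have hmem : iota (h.trans (permOmega σ)) ∈ ⋂₀ F := by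
    rw [Set.mem_sInter]
    intro s hs
    exact hBfun s hs σ (hσ (Bfun s) (Set.mem_image_of_mem _ hs))
  exact hbO hmem

/-- Key claim: if every permutation fixing `𝓑` keeps `h` in `V ⊆ Nbhd A`, then no
`𝓑`-atom `E` is split by `A` into two infinite pieces. -/
theorem no_split {V : Set Hsp} {𝓑 : Set (Set ℕ)} {h : Hsp} (hhV : h ∈ V)
    (hstab : ∀ σ : ℕ ≃ ℕ, (∀ B ∈ 𝓑, σ ⁻¹' B = B) → h.trans (permOmega σ) ∈ V)
    {A : Set ℕ} (hVN : V ⊆ Nbhd A)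
    {E : Set ℕ} (hE : ∀ B ∈ 𝓑, E ⊆ B ∨ E ∩ B = ∅) :
    (E ∩ A).Finite ∨ (E \ A).Finite := by
  by_contra hc
  push_neg at hc
  obtain ⟨hP, hQ⟩ := hc
  set P := E ∩ A with hPdef
  set Q := E \ A with hQdef
  have hdisj : Disjoint P Q := Set.disjoint_left.mpr fun x hx hx' => hx'.2 hx.2
  obtain ⟨σ, hσPQ, hσQP, hσid⟩ := exists_swap_perm hP hQ hdisj
  have hPQE : P ∪ Q ⊆ E := by
    intro x hx
    rcases hx with hx | hx
    exacts [hx.1, hx.1]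
  have hfix : ∀ B ∈ 𝓑, σ ⁻¹' B = B := by
    intro B hB
    ext x
    simp only [Set.mem_preimage]
    by_cases hx : x ∈ P ∪ Q
    · have hσx : σ x ∈ P ∪ Q := by
        rcases hx with hx | hx
        exacts [Or.inr (hσPQ x hx), Or.inl (hσQP x hx)]
      rcases hE B hB with hEB | hEB
      · constructor <;> intro _
        · exact hEB (hPQE hx)
        · exact hEB (hPQE hσx)
      · constructor <;> intro hmem
        · exact absurd (Set.mem_inter (hPQE hσx) hmem) (by rw [hEB]; exact Set.notMem_empty _)
        · exact absurd (Set.mem_inter (hPQE hx) hmem) (by rw [hEB]; exact Set.notMem_empty _)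
    · rw [hσid x hx]
  have hgV : h.trans (permOmega σ) ∈ V := hstab σ hfix
  obtain ⟨x, hxP⟩ := exists_point hP
  have hxA : x ∈ star A := star_mono (by rw [hPdef]; exact Set.inter_subset_right) hxP
  obtain ⟨y, hyA, hyx⟩ := surjOn_star (hVN hhV) x hxA
  have hgy : (h.trans (permOmega σ)) y ∈ star A := (hVN hgV).1 hyA
  rw [Homeomorph.trans_apply, hyx] at hgy
  have : permOmega σ x ∈ star Aᶜ := by
    rw [permOmega_mem_star_iff]
    refine Filter.mem_of_superset hxP ?_
    intro a ha
    exact (hσPQ a ha).2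
  rw [star_compl] at this
  exact this hgy

/-- For an almost disjoint family of infinite sets, each nonempty open `V` is contained
in only finitely many of the neighborhoods `Nbhd (A i)`. -/
theorem fiber_finite {V : Set Hsp} (hV : IsOpen V) (hne : V.Nonempty)
    {I : Type} (A : I → Set ℕ) (hAinf : ∀ i, (A i).Infinite)
    (hAD : ∀ i j, i ≠ j → (A i ∩ A j).Finite) :
    {i | V ⊆ Nbhd (A i)}.Finite := by
  classical
  obtain ⟨h, hh⟩ := hne
  obtain ⟨𝓑, h𝓑fin, hstab⟩ := exists_invariant_family hV hh
  set c : ℕ → Set (Set ℕ) := fun y => {B ∈ 𝓑 | y ∈ B} with hc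
  have hrange : (Set.range c).Finite := by
    apply h𝓑fin.finite_subsets.subset
    rintro _ ⟨y, rfl⟩
    intro B hB
    exact hB.1
  -- atoms are compatible with 𝓑
  have hatom : ∀ v : Set (Set ℕ), ∀ B ∈ 𝓑, c ⁻¹' {v} ⊆ B ∨ (c ⁻¹' {v}) ∩ B = ∅ := by
    intro v B hB
    by_cases hv : ∃ x₀, c x₀ = v ∧ x₀ ∈ B
    · obtain ⟨x₀, hx₀v, hx₀B⟩ := hv
      left
      intro y hy
      have : c y = v := hy
      have hBc : B ∈ c x₀ := ⟨hB, hx₀B⟩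
      rw [hx₀v] at hBc
      rw [← this] at hBc
      exact hBc.2
    · right
      ext y
      simp only [Set.mem_inter_iff, Set.mem_preimage, Set.mem_singleton_iff,
        Set.mem_empty_iff_false, iff_false, not_and]
      intro hyv hyB
      exact hv ⟨y, hyv, hyB⟩
  -- the "trace" map on the fiber
  set J : I → Set (Set (Set ℕ)) :=
    fun i => {v | (c ⁻¹' {v}).Infinite ∧ (c ⁻¹' {v} \ A i).Finite} with hJ
  have hnosplit : ∀ i, V ⊆ Nbhd (A i) → ∀ v : Set (Set ℕ),
      (c ⁻¹' {v} ∩ A i).Finite ∨ (c ⁻¹' {v} \ A i).Finite :=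
    fun i hi v => no_split hh hstab hi (hatom v)
  have hJsub : ∀ i, J i ⊆ Set.range c := by
    intro i v hv
    obtain ⟨y, hy⟩ := hv.1.nonempty
    exact ⟨y, hy⟩
  have hinj : Set.InjOn J {i | V ⊆ Nbhd (A i)} := by
    intro i hi j hj hJij
    by_contra hij
    -- A i \ A j is finite
    have hdiff : (A i \ A j).Finite := by
      have hcover : A i \ A j ⊆ ⋃ v ∈ Set.range c, (c ⁻¹' {v} ∩ (A i \ A j)) := by
        intro y hy
        exact Set.mem_biUnion ⟨y, rfl⟩ ⟨rfl, hy⟩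
      apply Set.Finite.subset _ hcover
      apply hrange.biUnion
      intro v _
      by_cases hEfin : (c ⁻¹' {v}).Finite
      · exact hEfin.subset fun y hy => hy.1
      · rcases hnosplit i hi v with hfin | hfin
        · exact hfin.subset fun y hy => ⟨hy.1, hy.2.1⟩
        · have hvJ : v ∈ J i := ⟨hEfin, hfin⟩
          rw [hJij] at hvJ
          exact hvJ.2.subset fun y hy => ⟨hy.1, hy.2.2⟩
    have : (A i).Finite := by
      have := hdiff.union (hAD i j hij)
      apply this.subset
      intro y hy
      by_cases hyj : y ∈ A j
      exacts [Or.inr ⟨hy, hyj⟩, Or.inl ⟨hy, hyj⟩]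
    exact hAinf i this
  apply Set.Finite.of_finite_image _ hinj
  apply hrange.finite_subsets.subset
  rintro _ ⟨i, hi, rfl⟩
  exact hJsub i

/-! ### An almost disjoint family of size continuum -/

/-- The branch almost disjoint family indexed by `ℕ → Bool`. -/
def branchSet (x : ℕ → Bool) : Set ℕ :=
  Set.range fun n => Encodable.encode (List.ofFn fun i : Fin n => x i)

theorem branchSet_infinite (x : ℕ → Bool) : (branchSet x).Infinite := by
  apply Set.infinite_range_of_injective
  intro n m hnm
  have := congrArg (fun l => (Encodable.decode (α := List Bool) l)) hnm
  simp only [Encodable.encodek] at this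
  have hlen := congrArg (fun l : Option (List Bool) => (l.getD []).length) this
  simpa using hlen

theorem branchSet_almost_disjoint {x y : ℕ → Bool} (hxy : x ≠ y) :
    (branchSet x ∩ branchSet y).Finite := by
  have hex : ∃ N, x N ≠ y N := by
    by_contra hc
    push_neg at hc
    exact hxy (funext fun n => hc n)
  classical
  set N := Nat.find hex with hN
  have hsub : branchSet x ∩ branchSet y ⊆
      (fun n => Encodable.encode (List.ofFn fun i : Fin n => x i)) '' Set.Iic N := by
    rintro z ⟨⟨n, rfl⟩, ⟨m, hm⟩⟩
    have heq : (List.ofFn fun i : Fin m => y i) = (List.ofFn fun i : Fin n => x i) :=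
      Encodable.encode_injective hm
    have hlen : m = n := by
      have := congrArg List.length heq
      simpa using this
    subst hlen
    have hfun : (fun i : Fin m => y i) = fun i : Fin m => x i := List.ofFn_injective heq
    refine ⟨m, ?_, rfl⟩
    rw [Set.mem_Iic]
    by_contra hc
    push_neg at hc
    have hNm : N < m := hc
    have : x N = y N := (congrFun hfun ⟨N, hNm⟩).symm
    exact Nat.find_spec hex this
  exact ((Set.finite_Iic N).image _).subset hsub

theorem part1 (𝓥 : Set (Set Hsp))
    (hop : ∀ V ∈ 𝓥, V.Nonempty ∧ IsOpen V)
    (hpi : ∀ N ∈ nhds (1 : Hsp), ∃ V ∈ 𝓥, V ⊆ N) :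
    Cardinal.continuum ≤ Cardinal.mk 𝓥 := by
  classical
  -- choose a member of the π-base inside each `Nbhd (branchSet s)`
  have hch : ∀ s : ℕ → Bool, ∃ V : 𝓥, (V : Set Hsp) ⊆ Nbhd (branchSet s) := by
    intro s
    obtain ⟨V, hV𝓥, hVN⟩ := hpi _ (Nbhd_mem_nhds (branchSet s))
    exact ⟨⟨V, hV𝓥⟩, hVN⟩
  choose F hF using hch
  have hfib : ∀ V : 𝓥, (F ⁻¹' {V}).Finite := by
    intro V
    have := fiber_finite (hop V.1 V.2).2 (hop V.1 V.2).1 branchSet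
      branchSet_infinite (fun i j hij => branchSet_almost_disjoint hij)
    apply this.subset
    intro s hs
    rw [Set.mem_preimage, Set.mem_singleton_iff] at hs
    rw [Set.mem_setOf_eq, ← hs]
    exact hF s
  haveI hne : Nonempty ↥𝓥 := by
    obtain ⟨V, hV, _⟩ := hpi Set.univ Filter.univ_mem
    exact ⟨⟨V, hV⟩⟩
  have hunion : (⋃ V : 𝓥, F ⁻¹' {V}) = Set.univ := by
    ext s
    simp only [Set.mem_iUnion, Set.mem_univ, iff_true]
    exact ⟨F s, rfl⟩
  have hcard : Cardinal.mk (ℕ → Bool) ≤ Cardinal.mk 𝓥 * Cardinal.aleph0 := by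
    calc Cardinal.mk (ℕ → Bool) = Cardinal.mk (⋃ V : 𝓥, F ⁻¹' {V}) := by
          rw [hunion, Cardinal.mk_univ]
      _ ≤ Cardinal.mk 𝓥 * ⨆ V : 𝓥, Cardinal.mk (F ⁻¹' {V}) := Cardinal.mk_iUnion_le _
      _ ≤ Cardinal.mk 𝓥 * Cardinal.aleph0 := by
          apply mul_le_mul_right
          apply ciSup_le'
          intro V
          exact ((hfib V).countable).le_aleph0
  have hcont : Cardinal.mk (ℕ → Bool) = Cardinal.continuum := by
    rw [← Cardinal.power_def, Cardinal.mk_bool, Cardinal.mk_nat, Cardinal.two_power_aleph0]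
  rw [hcont] at hcard
  by_cases hle : Cardinal.mk 𝓥 ≤ Cardinal.aleph0
  · exfalso
    have : Cardinal.continuum ≤ Cardinal.aleph0 := by
      calc Cardinal.continuum ≤ Cardinal.mk 𝓥 * Cardinal.aleph0 := hcard
        _ ≤ Cardinal.aleph0 * Cardinal.aleph0 := mul_le_mul_left hle _
        _ = Cardinal.aleph0 := by rw [Cardinal.aleph0_mul_aleph0]
    exact absurd this (not_le.mpr Cardinal.aleph0_lt_continuum)
  · push_neg at hle
    rwa [Cardinal.mul_aleph0_eq hle.le] at hcard

/-- The canonical base element of the base at the identity. -/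
def baseSet (l : List (Set ℕ)) : Set Hsp :=
  {g | ∀ A ∈ l, Set.MapsTo ⇑g (star A) (star A)}

theorem isOpen_baseSet (l : List (Set ℕ)) : IsOpen (baseSet l) := by
  have h : baseSet l = ⋂ A ∈ {A | A ∈ l}, {g : Hsp | Set.MapsTo ⇑g (star A) (star A)} := by
    ext g
    simp only [baseSet, Set.mem_setOf_eq, Set.mem_iInter]
  rw [h]
  exact l.finite_toSet.isOpen_biInter fun A _ => isOpen_starMapsTo A A

theorem one_mem_baseSet (l : List (Set ℕ)) : (1 : Hsp) ∈ baseSet l := by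
  intro A _
  rw [one_coe]
  exact fun x hx => hx

theorem part2 : ∃ 𝓑 : Set (Set Hsp),
    Cardinal.mk 𝓑 = Cardinal.continuum ∧
    (∀ B ∈ 𝓑, IsOpen B ∧ (1 : Hsp) ∈ B) ∧
    (∀ N ∈ nhds (1 : Hsp), ∃ B ∈ 𝓑, B ⊆ N) := by
  classical
  refine ⟨Set.range baseSet, ?_, ?_, ?_⟩
  · apply le_antisymm
    · calc Cardinal.mk (Set.range baseSet) ≤ Cardinal.mk (List (Set ℕ)) := Cardinal.mk_range_le
        _ = Cardinal.mk (Set ℕ) := Cardinal.mk_list_eq_mk _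
        _ = Cardinal.continuum := by
            rw [Cardinal.mk_set, Cardinal.mk_nat, Cardinal.two_power_aleph0]
    · apply part1
      · rintro V ⟨l, rfl⟩
        exact ⟨⟨1, one_mem_baseSet l⟩, isOpen_baseSet l⟩
      · intro N hN
        obtain ⟨G, hGfin, hGN⟩ := exists_stone_nbhd hN
        refine ⟨baseSet hGfin.toFinset.toList, ⟨_, rfl⟩, ?_⟩
        intro g hg
        apply hGN
        intro A hA
        exact hg A (by rwa [Finset.mem_toList, Set.Finite.mem_toFinset])
  · rintro B ⟨l, rfl⟩
    exact ⟨isOpen_baseSet l, one_mem_baseSet l⟩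
  · intro N hN
    obtain ⟨G, hGfin, hGN⟩ := exists_stone_nbhd hN
    refine ⟨baseSet hGfin.toFinset.toList, ⟨_, rfl⟩, ?_⟩
    intro g hg
    apply hGN
    intro A hA
    exact hg A (by rwa [Finset.mem_toList, Set.Finite.mem_toFinset])

end OmegaStarAux

/-- Every local π-base at the identity of `H(ω*)` has cardinality at
least `𝔠`; moreover there is a local base at the identity consisting of open
neighborhoods of the identity of cardinality `𝔠` (so the character and π-character of
`H(ω*)` at the identity both equal `𝔠`). -/
theorem character_homeoOmegaStar :
    (∀ 𝓥 : Set (Set (OmegaStar ≃ₜ OmegaStar)),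
      (∀ V ∈ 𝓥, V.Nonempty ∧ IsOpen V) →
      (∀ N ∈ nhds (1 : OmegaStar ≃ₜ OmegaStar), ∃ V ∈ 𝓥, V ⊆ N) →
      Cardinal.continuum ≤ Cardinal.mk 𝓥) ∧
    ∃ 𝓑 : Set (Set (OmegaStar ≃ₜ OmegaStar)),
      Cardinal.mk 𝓑 = Cardinal.continuum ∧
      (∀ B ∈ 𝓑, IsOpen B ∧ (1 : OmegaStar ≃ₜ OmegaStar) ∈ B) ∧
      (∀ N ∈ nhds (1 : OmegaStar ≃ₜ OmegaStar), ∃ B ∈ 𝓑, B ⊆ N) :=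
  ⟨OmegaStarAux.part1, OmegaStarAux.part2⟩
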